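/- Let 0 < α < 1, t₀ ∈ ℝ, and g : [t₀, t₀+a] → ℝ measurable with |g(s)| ≤ H for all s. Define F(t) = (1/Γ(α)) ∫_{t₀}^{t} (t-s)^{α-1} g(s) ds. Then for all t₁ < t₂ in [t₀, t₀+a], |F(t₁) - F(t₂)| ≤ (H/Γ(α+1))·(|(t₂-t₀)^α - (t₁-t₀)^α + (t₂-t₁)^α| + (t₂-t₁)^α). -/

import Mathlib

open MeasureTheory intervalIntegral Set

private lemma kerInt {α : ℝ} (hα1 : α < 1+1) (hα : 0 < α) (e c d : ℝ) :
    IntervalIntegrable (fun s => (e - s) ^ (α - 1)) volume c d := by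
  have h := intervalIntegral.intervalIntegrable_rpow' (a := e - c) (b := e - d)
    (by linarith : (-1:ℝ) < α - 1)
  simpa using h.comp_sub_left e

private lemma kerVal {α : ℝ} (hα : 0 < α) (e c d : ℝ) :
    (∫ s in c..d, (e - s) ^ (α - 1)) = ((e - c) ^ α - (e - d) ^ α) / α := by
  have h := intervalIntegral.integral_comp_sub_left (a := c) (b := d)
    (fun x : ℝ => x ^ (α - 1)) e
  rw [h, integral_rpow (Or.inl (by linarith)), show α - 1 + 1 = α by ring]

theorem stmt10 (t₀ a α H : ℝ) (ha : 0 < a) (hα : 0 < α) (hα1 : α < 1)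
    (g : ℝ → ℝ) (hg : Measurable g)
    (hbound : ∀ s ∈ Set.Icc t₀ (t₀ + a), |g s| ≤ H)
    (F : ℝ → ℝ)
    (hF : ∀ t, F t = (1 / Real.Gamma α) * ∫ s in t₀..t, (t - s) ^ (α - 1) * g s) :
    ∀ t₁ ∈ Set.Icc t₀ (t₀ + a), ∀ t₂ ∈ Set.Icc t₀ (t₀ + a), t₁ < t₂ →
      |F t₁ - F t₂| ≤ (H / Real.Gamma (α + 1)) *
        (|(t₂ - t₀) ^ α - (t₁ - t₀) ^ α + (t₂ - t₁) ^ α| + (t₂ - t₁) ^ α) := by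
  intro t₁ h1 t₂ h2 hlt
  obtain ⟨h1l, h1r⟩ := h1
  obtain ⟨h2l, h2r⟩ := h2
  have hH : 0 ≤ H := (abs_nonneg _).trans (hbound t₀ ⟨le_refl _, by linarith⟩)
  have hΓ : 0 < Real.Gamma α := Real.Gamma_pos_of_pos hα
  have hΓ1 : Real.Gamma (α + 1) = α * Real.Gamma α := Real.Gamma_add_one hα.ne'
  have hmeas : ∀ e : ℝ, Measurable (fun s => (e - s) ^ (α - 1) * g s) := fun e =>
    ((measurable_const.sub measurable_id).pow_const _).mul hg
  -- integrability of kernel * g on subintervals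
  have prodInt : ∀ c d e : ℝ, c ≤ d → d ≤ e → t₀ ≤ c → d ≤ t₀ + a →
      IntervalIntegrable (fun s => (e - s) ^ (α - 1) * g s) volume c d := by
    intro c d e hcd hde hc hd
    have hker := kerInt (by linarith) hα e c d
    rw [intervalIntegrable_iff, uIoc_of_le hcd] at hker ⊢
    refine Integrable.mono' (hker.const_mul H) ((hmeas e).aestronglyMeasurable) ?_
    filter_upwards [ae_restrict_mem measurableSet_Ioc] with s hs
    have h0 : (0:ℝ) ≤ (e - s) ^ (α - 1) := Real.rpow_nonneg (by linarith [hs.2]) _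
    rw [Real.norm_eq_abs, abs_mul, abs_of_nonneg h0, mul_comm H]
    exact mul_le_mul_of_nonneg_left
      (hbound s ⟨by linarith [hs.1], by linarith [hs.2]⟩) h0
  have hi1 : IntervalIntegrable (fun s => (t₁ - s) ^ (α - 1) * g s) volume t₀ t₁ :=
    prodInt t₀ t₁ t₁ (by linarith) le_rfl le_rfl (by linarith)
  have hi2a : IntervalIntegrable (fun s => (t₂ - s) ^ (α - 1) * g s) volume t₀ t₁ :=
    prodInt t₀ t₁ t₂ (by linarith) hlt.le le_rfl (by linarith)
  have hi2b : IntervalIntegrable (fun s => (t₂ - s) ^ (α - 1) * g s) volume t₁ t₂ :=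
    prodInt t₁ t₂ t₂ hlt.le le_rfl h1l h2r
  -- split F t₂
  have hsplit : (∫ s in t₀..t₂, (t₂ - s) ^ (α - 1) * g s)
      = (∫ s in t₀..t₁, (t₂ - s) ^ (α - 1) * g s)
        + ∫ s in t₁..t₂, (t₂ - s) ^ (α - 1) * g s :=
    (intervalIntegral.integral_add_adjacent_intervals hi2a hi2b).symm
  -- estimate piece 1
  set A : ℝ := (t₁ - t₀) ^ α - (t₂ - t₀) ^ α + (t₂ - t₁) ^ α with hA
  have hE1 : |(∫ s in t₀..t₁, (t₁ - s) ^ (α - 1) * g s)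
      - ∫ s in t₀..t₁, (t₂ - s) ^ (α - 1) * g s| ≤ |H * A / α| := by
    rw [← intervalIntegral.integral_sub hi1 hi2a]
    have hg1 : IntervalIntegrable
        (fun s => H * ((t₁ - s) ^ (α - 1) - (t₂ - s) ^ (α - 1))) volume t₀ t₁ :=
      (((kerInt (by linarith) hα t₁ t₀ t₁).sub (kerInt (by linarith) hα t₂ t₀ t₁)).const_mul H)
    have key := intervalIntegral.norm_integral_le_abs_of_norm_le (μ := volume) (a := t₀) (b := t₁)
      (f := fun s => (t₁ - s) ^ (α - 1) * g s - (t₂ - s) ^ (α - 1) * g s)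
      (g := fun s => H * ((t₁ - s) ^ (α - 1) - (t₂ - s) ^ (α - 1))) ?_ hg1
    · rw [Real.norm_eq_abs] at key
      refine key.trans (le_of_eq ?_)
      congr 1
      rw [intervalIntegral.integral_const_mul, intervalIntegral.integral_sub
        (kerInt (by linarith) hα t₁ t₀ t₁) (kerInt (by linarith) hα t₂ t₀ t₁),
        kerVal hα t₁ t₀ t₁, kerVal hα t₂ t₀ t₁, sub_self,
        Real.zero_rpow hα.ne', hA]
      ring
    · have hne : ∀ᵐ s : ℝ, s ≠ t₁ := by
        rw [ae_iff]
        simp [Set.setOf_eq_eq_singleton, measure_singleton]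
      rw [uIoc_of_le (by linarith : t₀ ≤ t₁)]
      filter_upwards [ae_restrict_mem measurableSet_Ioc, ae_restrict_of_ae hne] with s hs hsne
      have hs1 : s < t₁ := lt_of_le_of_ne hs.2 hsne
      have hk1 : (0:ℝ) < t₁ - s := by linarith
      have hk2 : (t₂ - s) ^ (α - 1) ≤ (t₁ - s) ^ (α - 1) :=
        Real.rpow_le_rpow_of_nonpos hk1 (by linarith) (by linarith)
      have h0 : (0:ℝ) ≤ (t₁ - s) ^ (α - 1) - (t₂ - s) ^ (α - 1) := by linarith
      rw [show (t₁ - s) ^ (α - 1) * g s - (t₂ - s) ^ (α - 1) * g s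
          = ((t₁ - s) ^ (α - 1) - (t₂ - s) ^ (α - 1)) * g s by ring,
        Real.norm_eq_abs, abs_mul, abs_of_nonneg h0, mul_comm H]
      exact mul_le_mul_of_nonneg_left
        (hbound s ⟨by linarith [hs.1], by linarith [hs.2]⟩) h0
  -- estimate piece 2
  have hE2 : |∫ s in t₁..t₂, (t₂ - s) ^ (α - 1) * g s| ≤ H * (t₂ - t₁) ^ α / α := by
    have hg2 : IntervalIntegrable (fun s => H * (t₂ - s) ^ (α - 1)) volume t₁ t₂ :=
      (kerInt (by linarith) hα t₂ t₁ t₂).const_mul H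
    have key := intervalIntegral.norm_integral_le_abs_of_norm_le (μ := volume) (a := t₁) (b := t₂)
      (f := fun s => (t₂ - s) ^ (α - 1) * g s)
      (g := fun s => H * (t₂ - s) ^ (α - 1)) ?_ hg2
    · rw [Real.norm_eq_abs] at key
      refine key.trans (le_of_eq ?_)
      rw [intervalIntegral.integral_const_mul, kerVal hα t₂ t₁ t₂, sub_self,
        Real.zero_rpow hα.ne', sub_zero, abs_of_nonneg]
      · ring
      exact mul_nonneg hH (div_nonneg (Real.rpow_nonneg (by linarith) _) hα.le)
    · rw [uIoc_of_le hlt.le]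
      filter_upwards [ae_restrict_mem measurableSet_Ioc] with s hs
      have h0 : (0:ℝ) ≤ (t₂ - s) ^ (α - 1) := Real.rpow_nonneg (by linarith [hs.2]) _
      rw [Real.norm_eq_abs, abs_mul, abs_of_nonneg h0, mul_comm H]
      exact mul_le_mul_of_nonneg_left
        (hbound s ⟨by linarith [hs.1], by linarith [hs.2]⟩) h0
  -- combine
  set B : ℝ := (t₂ - t₀) ^ α - (t₁ - t₀) ^ α + (t₂ - t₁) ^ α with hB
  have hBnn : (t₁ - t₀) ^ α ≤ (t₂ - t₀) ^ α :=
    Real.rpow_le_rpow (by linarith) (by linarith) hα.le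
  have htnn : (0:ℝ) ≤ (t₂ - t₁) ^ α := Real.rpow_nonneg (by linarith) _
  have hAB : |A| ≤ B := by
    rw [abs_le]
    constructor <;> [skip; skip] <;> simp only [hA, hB] <;> nlinarith
  have hBabs : |B| = B := abs_of_nonneg (by simp only [hB]; nlinarith)
  rw [hF t₁, hF t₂, hsplit]
  have expand : (1 / Real.Gamma α) * (∫ s in t₀..t₁, (t₁ - s) ^ (α - 1) * g s)
      - (1 / Real.Gamma α) * ((∫ s in t₀..t₁, (t₂ - s) ^ (α - 1) * g s)
        + ∫ s in t₁..t₂, (t₂ - s) ^ (α - 1) * g s)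
      = (1 / Real.Gamma α) * (((∫ s in t₀..t₁, (t₁ - s) ^ (α - 1) * g s)
          - ∫ s in t₀..t₁, (t₂ - s) ^ (α - 1) * g s)
        - ∫ s in t₁..t₂, (t₂ - s) ^ (α - 1) * g s) := by ring
  rw [expand, abs_mul, abs_of_nonneg (by positivity : (0:ℝ) ≤ 1 / Real.Gamma α)]
  have step : |(((∫ s in t₀..t₁, (t₁ - s) ^ (α - 1) * g s)
          - ∫ s in t₀..t₁, (t₂ - s) ^ (α - 1) * g s)
        - ∫ s in t₁..t₂, (t₂ - s) ^ (α - 1) * g s)|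
      ≤ |H * A / α| + H * (t₂ - t₁) ^ α / α :=
    (abs_sub _ _).trans (add_le_add hE1 hE2)
  refine ((mul_le_mul_of_nonneg_left step (by positivity)).trans ?_)
  have habsHA : |H * A / α| ≤ H * B / α := by
    rw [abs_div, abs_mul, abs_of_nonneg hH, abs_of_pos hα]
    gcongr
  refine le_trans (mul_le_mul_of_nonneg_left (add_le_add_left habsHA _)
    (by positivity : (0:ℝ) ≤ 1 / Real.Gamma α)) (le_of_eq ?_)
  rw [hBabs, hΓ1]
  field_simp
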